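/- Suppose φ : C → A has a quasi-basis {(u_i, v_i)}_{i=1}^m, and let p ∈ M_n(A) be a full projection with elements a_1,…,a_K, b_1,…,b_K ∈ M_n(A) satisfying Σ_j a_j p b_j = 1. Then the finite family {(p(u_i ⊗ I_n)a_j p, p b_j(v_i ⊗ I_n)p)}_{i,j} is a quasi-basis for the map F(φ) = (φ ⊗ id)|_{pM_n(C)p} : pM_n(C)p → pM_n(A)p. -/

import Mathlib

/-- A pair `(X, Y)` implementing a strong Morita equivalence of unital inclusions
`A ⊆ C` and `B ⊆ D` of unital C*-algebras: `Y` is a `C`–`D`-equivalence bimodule and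
`X` is a closed subspace of `Y` which is an `A`–`B`-equivalence bimodule with the
restricted actions and inner products. -/
structure MoritaPair
    (A : Type*) [NormedRing A] [StarRing A] [CStarRing A] [NormedAlgebra ℂ A]
      [CompleteSpace A] [StarModule ℂ A]
    (C : Type*) [NormedRing C] [StarRing C] [CStarRing C] [NormedAlgebra ℂ C]
      [CompleteSpace C] [StarModule ℂ C]
    (B : Type*) [NormedRing B] [StarRing B] [CStarRing B] [NormedAlgebra ℂ B]
      [CompleteSpace B] [StarModule ℂ B]
    (D : Type*) [NormedRing D] [StarRing D] [CStarRing D] [NormedAlgebra ℂ D]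
      [CompleteSpace D] [StarModule ℂ D]
    (X : Type*) [NormedAddCommGroup X] [NormedSpace ℂ X]
    (Y : Type*) [NormedAddCommGroup Y] [NormedSpace ℂ Y] [CompleteSpace Y] where
  /-- the unital isometric *-embedding of `A` into `C` -/
  ιA : A →⋆ₐ[ℂ] C
  /-- the unital isometric *-embedding of `B` into `D` -/
  ιB : B →⋆ₐ[ℂ] D
  ιA_isometry : Isometry ιA
  ιB_isometry : Isometry ιB
  /-- the inclusion of the closed subspace `X` into `Y` -/
  incl : X →ₗ[ℂ] Y
  incl_norm : ∀ x, ‖incl x‖ = ‖x‖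
  incl_closed : IsClosed (Set.range incl)
  /-- left action of `C` on `Y` -/
  lC : C → Y → Y
  lC_one : ∀ y, lC 1 y = y
  lC_mul : ∀ c c' y, lC (c * c') y = lC c (lC c' y)
  lC_add_right : ∀ c y y', lC c (y + y') = lC c y + lC c y'
  lC_add_left : ∀ c c' y, lC (c + c') y = lC c y + lC c' y
  lC_smul : ∀ (z : ℂ) c y, lC (z • c) y = z • lC c y
  /-- right action of `D` on `Y` -/
  rD : Y → D → Y
  rD_one : ∀ y, rD y 1 = y
  rD_mul : ∀ y d d', rD y (d * d') = rD (rD y d) d'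
  rD_add_left : ∀ y y' d, rD (y + y') d = rD y d + rD y' d
  rD_add_right : ∀ y d d', rD y (d + d') = rD y d + rD y d'
  rD_smul : ∀ (z : ℂ) y d, rD y (z • d) = z • rD y d
  smul_assoc : ∀ c y d, rD (lC c y) d = lC c (rD y d)
  /-- the left `C`-valued inner product on `Y` -/
  innC : Y → Y → C
  innC_add_left : ∀ y y' z, innC (y + y') z = innC y z + innC y' z
  innC_star : ∀ y z, star (innC y z) = innC z y
  innC_lC : ∀ c y z, innC (lC c y) z = c * innC y z
  innC_norm : ∀ y, ‖innC y y‖ = ‖y‖ ^ 2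
  /-- the right `D`-valued inner product on `Y` -/
  innD : Y → Y → D
  innD_add_right : ∀ y z z', innD y (z + z') = innD y z + innD y z'
  innD_star : ∀ y z, star (innD y z) = innD z y
  innD_rD : ∀ y z d, innD y (rD z d) = innD y z * d
  innD_norm : ∀ y, ‖innD y y‖ = ‖y‖ ^ 2
  imprimitivity : ∀ y z w, lC (innC y z) w = rD y (innD z w)
  innC_full : (Submodule.span ℂ {c : C | ∃ y z, innC y z = c}).topologicalClosure = ⊤
  innD_full : (Submodule.span ℂ {d : D | ∃ y z, innD y z = d}).topologicalClosure = ⊤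
  /-- left action of `A` on `X`, the restriction of the `C`-action -/
  lA : A → X → X
  lA_compat : ∀ a x, incl (lA a x) = lC (ιA a) (incl x)
  /-- right action of `B` on `X`, the restriction of the `D`-action -/
  rB : X → B → X
  rB_compat : ∀ x b, incl (rB x b) = rD (incl x) (ιB b)
  /-- the left `A`-valued inner product on `X`, the restriction of `innC` -/
  innA : X → X → A
  innA_compat : ∀ x z, ιA (innA x z) = innC (incl x) (incl z)
  /-- the right `B`-valued inner product on `X`, the restriction of `innD` -/
  innB : X → X → B
  innB_compat : ∀ x z, ιB (innB x z) = innD (incl x) (incl z)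
  innA_full : (Submodule.span ℂ {a : A | ∃ x z, innA x z = a}).topologicalClosure = ⊤
  innB_full : (Submodule.span ℂ {b : B | ∃ x z, innB x z = b}).topologicalClosure = ⊤

variable {A : Type*} [NormedRing A] [StarRing A] [CStarRing A] [NormedAlgebra ℂ A]
  [CompleteSpace A] [StarModule ℂ A]
variable {C : Type*} [NormedRing C] [StarRing C] [CStarRing C] [NormedAlgebra ℂ C]
  [CompleteSpace C] [StarModule ℂ C]
variable {B : Type*} [NormedRing B] [StarRing B] [CStarRing B] [NormedAlgebra ℂ B]
  [CompleteSpace B] [StarModule ℂ B]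
variable {D : Type*} [NormedRing D] [StarRing D] [CStarRing D] [NormedAlgebra ℂ D]
  [CompleteSpace D] [StarModule ℂ D]
variable {X : Type*} [NormedAddCommGroup X] [NormedSpace ℂ X]
variable {Y : Type*} [NormedAddCommGroup Y] [NormedSpace ℂ Y] [CompleteSpace Y]

/-- if `φ : C → A` has a quasi-basis `{(u_i, v_i)}` and `p ∈ M_n(A)` is a
projection with `Σ_j a_j p b_j = 1`, then `{(p(u_i ⊗ Iₙ)a_j p, p b_j (v_i ⊗ Iₙ)p)}` is a
quasi-basis for `F(φ) = (φ ⊗ id)|_{pM_n(C)p} : pM_n(C)p → pM_n(A)p`.  All equations are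
written inside `M_n(C)` via the entrywise embedding `ιA : A → C`. -/
theorem stmt14 (ιA : A →⋆ₐ[ℂ] C) (hιA : Isometry ιA)
    (φ : C →L[ℂ] A)
    (hφ : ∀ (a : A) (c : C), φ (ιA a * c) = a * φ c ∧ φ (c * ιA a) = φ c * a)
    (m : ℕ) (u v : Fin m → C)
    (hqb : ∀ c : C, c = ∑ i, u i * ιA (φ (v i * c)) ∧ c = ∑ i, ιA (φ (c * u i)) * v i)
    (n K : ℕ) (p : Matrix (Fin n) (Fin n) A)
    (hp : p * p = p) (hpstar : star p = p)
    (a b : Fin K → Matrix (Fin n) (Fin n) A)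
    (hfull : ∑ j, a j * p * b j = 1) :
    ∀ w : Matrix (Fin n) (Fin n) C, w = p.map ιA * w * p.map ιA →
      (w = ∑ i, ∑ j,
          (p.map ιA * Matrix.scalar (Fin n) (u i) * (a j).map ιA * p.map ιA) *
            ((p.map ιA * (b j).map ιA * Matrix.scalar (Fin n) (v i) * p.map ιA * w).map
              (fun c => ιA (φ c)))) ∧
      (w = ∑ i, ∑ j,
          ((w * (p.map ιA * Matrix.scalar (Fin n) (u i) * (a j).map ιA * p.map ιA)).map
              (fun c => ιA (φ c))) *
            (p.map ιA * (b j).map ιA * Matrix.scalar (Fin n) (v i) * p.map ιA)) := by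
  classical
  set P : Matrix (Fin n) (Fin n) C := p.map ιA with hPdef
  have hmapmul : ∀ (M N : Matrix (Fin n) (Fin n) A),
      (M * N).map ιA = M.map ιA * N.map ιA := by
    intro M N; ext k l
    simp [Matrix.map_apply, Matrix.mul_apply, map_sum]
  have hPP : P * P = P := by rw [← hmapmul, hp]
  set psi : Matrix (Fin n) (Fin n) C → Matrix (Fin n) (Fin n) C :=
    fun W => W.map (fun c => ιA (φ c)) with hpsidef
  have hpsiL : ∀ (M : Matrix (Fin n) (Fin n) A) (W : Matrix (Fin n) (Fin n) C),
      psi (M.map ιA * W) = M.map ιA * psi W := by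
    intro M W; ext k l
    simp only [hpsidef, Matrix.map_apply, Matrix.mul_apply]
    rw [map_sum φ, map_sum ιA]
    refine Finset.sum_congr rfl fun t _ => ?_
    rw [(hφ (M k t) (W t l)).1, map_mul]
  have hpsiR : ∀ (W : Matrix (Fin n) (Fin n) C) (M : Matrix (Fin n) (Fin n) A),
      psi (W * M.map ιA) = psi W * M.map ιA := by
    intro W M; ext k l
    simp only [hpsidef, Matrix.map_apply, Matrix.mul_apply]
    rw [map_sum φ, map_sum ιA]
    refine Finset.sum_congr rfl fun t _ => ?_
    rw [(hφ (M t l) (W k t)).2, map_mul]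
  have hqbL : ∀ W : Matrix (Fin n) (Fin n) C,
      W = ∑ i, Matrix.scalar (Fin n) (u i) * psi (Matrix.scalar (Fin n) (v i) * W) := by
    intro W; ext k l
    rw [Matrix.sum_apply]
    simp only [Matrix.scalar_apply, hpsidef, Matrix.map_apply, Matrix.diagonal_mul]
    exact (hqb (W k l)).1
  have hqbR : ∀ W : Matrix (Fin n) (Fin n) C,
      W = ∑ i, psi (W * Matrix.scalar (Fin n) (u i)) * Matrix.scalar (Fin n) (v i) := by
    intro W; ext k l
    rw [Matrix.sum_apply]
    simp only [Matrix.scalar_apply, hpsidef, Matrix.map_apply, Matrix.mul_diagonal]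
    exact (hqb (W k l)).2
  have hfullC : ∑ j, (a j).map ιA * P * (b j).map ιA = 1 := by
    have h2 : ∀ j : Fin K, (a j).map ιA * P * (b j).map ιA = (a j * p * b j).map ιA :=
      fun j => by rw [hmapmul, hmapmul]
    have h3 : ∑ j, (a j * p * b j).map ιA = (∑ j, a j * p * b j).map ιA := by
      ext k l
      rw [Matrix.sum_apply, Matrix.map_apply, Matrix.sum_apply, map_sum ιA]
      exact Finset.sum_congr rfl fun j _ => by rw [Matrix.map_apply]
    rw [Finset.sum_congr rfl fun j _ => h2 j, h3, hfull,
      Matrix.map_one ιA (map_zero ιA) (map_one ιA)]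
  intro w hw
  have hPw : P * w = w := by
    conv_lhs => rw [hw]
    rw [← mul_assoc, ← mul_assoc, hPP]
    exact hw.symm
  have hwP : w * P = w := by
    conv_lhs => rw [hw]
    rw [mul_assoc, hPP]
    exact hw.symm
  have hPPx : ∀ X : Matrix (Fin n) (Fin n) C, P * (P * X) = P * X := by
    intro X; rw [← mul_assoc, hPP]
  constructor
  · -- first identity
    have term : ∀ (i : Fin m) (j : Fin K),
        (P * Matrix.scalar (Fin n) (u i) * (a j).map ιA * P) *
            psi (P * (b j).map ιA * Matrix.scalar (Fin n) (v i) * P * w)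
          = (P * Matrix.scalar (Fin n) (u i)) *
              (((a j).map ιA * P * (b j).map ιA) *
                psi (Matrix.scalar (Fin n) (v i) * w)) := by
      intro i j
      have h1 : P * (b j).map ιA * Matrix.scalar (Fin n) (v i) * P * w
          = (p * b j).map ιA * (Matrix.scalar (Fin n) (v i) * w) := by
        rw [hmapmul, mul_assoc (P * (b j).map ιA * Matrix.scalar (Fin n) (v i)) P w, hPw,
          mul_assoc, mul_assoc]
      rw [h1, hpsiL, hmapmul]
      simp only [mul_assoc, ← hPdef, hPPx]
    have inner : ∀ i : Fin m,
        (∑ j, (P * Matrix.scalar (Fin n) (u i) * (a j).map ιA * P) *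
            psi (P * (b j).map ιA * Matrix.scalar (Fin n) (v i) * P * w))
          = P * (Matrix.scalar (Fin n) (u i) * psi (Matrix.scalar (Fin n) (v i) * w)) := by
      intro i
      rw [Finset.sum_congr rfl fun j _ => term i j, ← Finset.mul_sum, ← Finset.sum_mul,
        hfullC, one_mul, mul_assoc]
    calc w = P * w := hPw.symm
      _ = P * ∑ i, Matrix.scalar (Fin n) (u i) * psi (Matrix.scalar (Fin n) (v i) * w) := by
          rw [← hqbL w]
      _ = ∑ i, P * (Matrix.scalar (Fin n) (u i) * psi (Matrix.scalar (Fin n) (v i) * w)) := by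
          rw [Finset.mul_sum]
      _ = _ := by rw [Finset.sum_congr rfl fun i _ => (inner i).symm]
  · -- second identity
    have term : ∀ (i : Fin m) (j : Fin K),
        psi (w * (P * Matrix.scalar (Fin n) (u i) * (a j).map ιA * P)) *
            (P * (b j).map ιA * Matrix.scalar (Fin n) (v i) * P)
          = (psi (w * Matrix.scalar (Fin n) (u i)) *
              ((a j).map ιA * P * (b j).map ιA)) *
                (Matrix.scalar (Fin n) (v i) * P) := by
      intro i j
      have h1 : w * (P * Matrix.scalar (Fin n) (u i) * (a j).map ιA * P)
          = (w * Matrix.scalar (Fin n) (u i)) * (a j * p).map ιA := by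
        rw [hmapmul, ← mul_assoc, ← mul_assoc, ← mul_assoc, hwP, mul_assoc]
      rw [h1, hpsiR, hmapmul]
      simp only [mul_assoc, ← hPdef, hPPx]
    have inner : ∀ i : Fin m,
        (∑ j, psi (w * (P * Matrix.scalar (Fin n) (u i) * (a j).map ιA * P)) *
            (P * (b j).map ιA * Matrix.scalar (Fin n) (v i) * P))
          = (psi (w * Matrix.scalar (Fin n) (u i)) * Matrix.scalar (Fin n) (v i)) * P := by
      intro i
      rw [Finset.sum_congr rfl fun j _ => term i j, ← Finset.sum_mul, ← Finset.mul_sum,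
        hfullC, mul_one, mul_assoc]
    calc w = w * P := hwP.symm
      _ = (∑ i, psi (w * Matrix.scalar (Fin n) (u i)) * Matrix.scalar (Fin n) (v i)) * P := by
          rw [← hqbR w]
      _ = ∑ i, (psi (w * Matrix.scalar (Fin n) (u i)) * Matrix.scalar (Fin n) (v i)) * P := by
          rw [Finset.sum_mul]
      _ = _ := by rw [Finset.sum_congr rfl fun i _ => (inner i).symm]
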